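/- arXiv:2402.07189 — 2 statements merged into one kernel-verified Lean document; each statement's English description precedes it below -/
import Mathlib

section
/- Let T be a TT-Rademacher distributed tensor of rank parameter R with mode dimensions d_1, ..., d_N. Then for any two distinct multi-indices (i_1,...,i_N) ≠ (i_1',...,i_N'), the entries T[i_1,...,i_N] and T[i_1',...,i_N'] are uncorrelated: E[T[i_1,...,i_N] · T[i_1',...,i_N']] = 0. -/
open MeasureTheory ProbabilityTheory

noncomputable section

/-- The law of a Rademacher random variable: `±1` with probability `1/2` each. -/
def rademacherLaw : Measure ℝ :=
  (2⁻¹ : ENNReal) • Measure.dirac 1 + (2⁻¹ : ENNReal) • Measure.dirac (-1)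

/-- The sequence of TT-ranks of a TT decomposition with rank parameter `R`:
the boundary ranks are `1` and all the internal ranks are `R` (so that the core
`G⁽ⁿ⁾` has shape `ttRk n × dₙ × ttRk (n+1)`, i.e. `1 × d₁ × R`, `R × dₙ × R`, …,
`R × d_N × 1`). -/
def ttRk (N R : ℕ) (k : Fin (N + 1)) : ℕ :=
  if k = 0 ∨ k = Fin.last N then 1 else R

/-- The unnormalized `(i₁, …, i_N)` entry of a TT tensor with cores `G⁽ⁿ⁾`:
the scalar matrix product `G⁽¹⁾[:,i₁,:] G⁽²⁾[:,i₂,:] ⋯ G⁽ᴺ⁾[:,i_N,:]`, written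
as a sum over all rank paths. -/
def ttChain {Ω : Type*} [MeasurableSpace Ω] {N R : ℕ} {d : Fin N → ℕ}
    (G : (n : Fin N) → Fin (ttRk N R n.castSucc) → Fin (d n) → Fin (ttRk N R n.succ) → Ω → ℝ)
    (i : (n : Fin N) → Fin (d n)) (ω : Ω) : ℝ :=
  ∑ p : (k : Fin (N + 1)) → Fin (ttRk N R k),
    ∏ n : Fin N, G n (p n.castSucc) (i n) (p n.succ) ω

/-- The `(i₁, …, i_N)` entry of the TT-Rademacher distributed tensor of rank parameter `R`
built from the cores `G⁽ⁿ⁾`: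
`T[i₁,…,i_N] = (1/√(R^{N−1})) G⁽¹⁾[:,i₁,:] G⁽²⁾[:,i₂,:] ⋯ G⁽ᴺ⁾[:,i_N,:]`. -/
def ttEntry {Ω : Type*} [MeasurableSpace Ω] {N R : ℕ} {d : Fin N → ℕ}
    (G : (n : Fin N) → Fin (ttRk N R n.castSucc) → Fin (d n) → Fin (ttRk N R n.succ) → Ω → ℝ)
    (i : (n : Fin N) → Fin (d n)) (ω : Ω) : ℝ :=
  (Real.sqrt (R ^ (N - 1)))⁻¹ * ttChain G i ω

/-- The inner product `⟨T, X⟩` of the TT-Rademacher tensor with a fixed tensor `X`. -/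
def ttInner {Ω : Type*} [MeasurableSpace Ω] {N R : ℕ} {d : Fin N → ℕ}
    (G : (n : Fin N) → Fin (ttRk N R n.castSucc) → Fin (d n) → Fin (ttRk N R n.succ) → Ω → ℝ)
    (X : ((n : Fin N) → Fin (d n)) → ℝ) (ω : Ω) : ℝ :=
  ∑ i : (n : Fin N) → Fin (d n), ttEntry G i ω * X i

lemma rademacher_integral_zero {Ω : Type*} [MeasurableSpace Ω] {μ : Measure Ω}
    {f : Ω → ℝ} (hf : Measurable f) (hlaw : μ.map f = rademacherLaw) :
    ∫ ω, f ω ∂μ = 0 := by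
  have h1 : Integrable (id : ℝ → ℝ) ((2⁻¹ : ENNReal) • Measure.dirac (1:ℝ)) := by
    refine Integrable.smul_measure ?_ (by norm_num)
    refine (integrable_congr ?_).mpr (integrable_const (1:ℝ))
    rw [ae_dirac_eq]
    exact Filter.eventually_pure.mpr rfl
  have h2 : Integrable (id : ℝ → ℝ) ((2⁻¹ : ENNReal) • Measure.dirac (-1:ℝ)) := by
    refine Integrable.smul_measure ?_ (by norm_num)
    refine (integrable_congr ?_).mpr (integrable_const (-1:ℝ))
    rw [ae_dirac_eq]
    exact Filter.eventually_pure.mpr rfl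
  calc ∫ ω, f ω ∂μ = ∫ x, id x ∂(μ.map f) := by
        rw [integral_map hf.aemeasurable aestronglyMeasurable_id]; rfl
    _ = ∫ x, id x ∂rademacherLaw := by rw [hlaw]
    _ = 0 := by
        rw [rademacherLaw, integral_add_measure h1 h2, integral_smul_measure,
          integral_smul_measure, integral_dirac, integral_dirac]
        norm_num

lemma rademacher_ae_pm {Ω : Type*} [MeasurableSpace Ω] {μ : Measure Ω}
    {f : Ω → ℝ} (hf : Measurable f) (hlaw : μ.map f = rademacherLaw) :
    ∀ᵐ ω ∂μ, f ω = 1 ∨ f ω = -1 := by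
  have hs : MeasurableSet {x : ℝ | x = 1 ∨ x = -1} := by
    have : {x : ℝ | x = 1 ∨ x = -1} = {1, -1} := by ext x; simp [Set.mem_insert_iff]
    rw [this]; exact (measurableSet_singleton (-1)).insert 1
  have h0 : μ.map f {x : ℝ | x = 1 ∨ x = -1}ᶜ = 0 := by
    rw [hlaw, rademacherLaw]
    simp only [Measure.add_apply, Measure.smul_apply, smul_eq_mul]
    rw [Measure.dirac_apply' _ hs.compl, Measure.dirac_apply' _ hs.compl]
    simp
  rw [Measure.map_apply hf hs.compl] at h0
  rw [ae_iff]
  convert h0 using 2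
  rfl

/-- Distinct entries of a TT-Rademacher distributed tensor of rank
parameter `R` are uncorrelated: `E[T[i₁,…,i_N] · T[i₁',…,i_N']] = 0` whenever the
multi-indices are distinct. -/
theorem tt_entries_uncorrelated
    {Ω : Type*} [MeasurableSpace Ω] (μ : Measure Ω) [IsProbabilityMeasure μ]
    (N R : ℕ) (d : Fin N → ℕ)
    (G : (n : Fin N) → Fin (ttRk N R n.castSucc) → Fin (d n) → Fin (ttRk N R n.succ) → Ω → ℝ)
    (hmeas : ∀ n a i b, Measurable (G n a i b))
    (hlaw : ∀ n a i b, μ.map (G n a i b) = rademacherLaw)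
    (hindep : iIndepFun
      (fun p : Σ n : Fin N, Fin (ttRk N R n.castSucc) × Fin (d n) × Fin (ttRk N R n.succ) =>
        G p.1 p.2.1 p.2.2.1 p.2.2.2) μ)
    (i i' : (n : Fin N) → Fin (d n)) (hii' : i ≠ i') :
    ∫ ω, ttEntry G i ω * ttEntry G i' ω ∂μ = 0 := by
  classical
  obtain ⟨m, hm⟩ : ∃ m, i m ≠ i' m := by
    by_contra h; push_neg at h; exact hii' (funext h)
  set g : (Σ n : Fin N, Fin (ttRk N R n.castSucc) × Fin (d n) × Fin (ttRk N R n.succ)) → Ω → ℝ :=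
    fun j => G j.1 j.2.1 j.2.2.1 j.2.2.2 with hgdef
  have hgmeas : ∀ j, Measurable (g j) := fun j => hmeas _ _ _ _
  have hglaw : ∀ j, μ.map (g j) = rademacherLaw := fun j => hlaw _ _ _ _
  have hae : ∀ᵐ ω ∂μ, ∀ j, g j ω = 1 ∨ g j ω = -1 :=
    (ae_all_iff).mpr fun j => rademacher_ae_pm (hgmeas j) (hglaw j)
  -- path-index maps
  let A : ((k : Fin (N + 1)) → Fin (ttRk N R k)) → Fin N →
      (Σ n : Fin N, Fin (ttRk N R n.castSucc) × Fin (d n) × Fin (ttRk N R n.succ)) :=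
    fun p n => ⟨n, (p n.castSucc, i n, p n.succ)⟩
  let B : ((k : Fin (N + 1)) → Fin (ttRk N R k)) → Fin N →
      (Σ n : Fin N, Fin (ttRk N R n.castSucc) × Fin (d n) × Fin (ttRk N R n.succ)) :=
    fun q n => ⟨n, (q n.castSucc, i' n, q n.succ)⟩
  have hAinj : ∀ p, Function.Injective (A p) := by
    intro p a b h
    exact congrArg Sigma.fst h
  have hBinj : ∀ q, Function.Injective (B q) := by
    intro q a b h
    exact congrArg Sigma.fst h
  -- exponents
  let e : ((k : Fin (N + 1)) → Fin (ttRk N R k)) → ((k : Fin (N + 1)) → Fin (ttRk N R k)) →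
      (Σ n : Fin N, Fin (ttRk N R n.castSucc) × Fin (d n) × Fin (ttRk N R n.succ)) → ℕ :=
    fun p q j => (if j ∈ Finset.univ.image (A p) then 1 else 0) +
      (if j ∈ Finset.univ.image (B q) then 1 else 0)
  have hprod : ∀ p q ω,
      (∏ n, g (A p n) ω) * (∏ n, g (B q n) ω) = ∏ j, g j ω ^ e p q j := by
    intro p q ω
    have h1 : ∏ j, g j ω ^ (if j ∈ Finset.univ.image (A p) then 1 else 0)
        = ∏ n, g (A p n) ω := by
      have step : (∏ j, g j ω ^ (if j ∈ Finset.univ.image (A p) then 1 else 0))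
          = ∏ j, (if j ∈ Finset.univ.image (A p) then g j ω else 1) :=
        Finset.prod_congr rfl fun j _ => by split <;> simp
      rw [step, Finset.prod_ite_mem, Finset.univ_inter,
        Finset.prod_image (fun a _ b _ h => hAinj p h)]
    have h2 : ∏ j, g j ω ^ (if j ∈ Finset.univ.image (B q) then 1 else 0)
        = ∏ n, g (B q n) ω := by
      have step : (∏ j, g j ω ^ (if j ∈ Finset.univ.image (B q) then 1 else 0))
          = ∏ j, (if j ∈ Finset.univ.image (B q) then g j ω else 1) :=
        Finset.prod_congr rfl fun j _ => by split <;> simp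
      rw [step, Finset.prod_ite_mem, Finset.univ_inter,
        Finset.prod_image (fun a _ b _ h => hBinj q h)]
    simp only [e, pow_add, Finset.prod_mul_distrib, h1, h2]
  have he1 : ∀ p q, e p q (A p m) = 1 := by
    intro p q
    have hmemA : A p m ∈ Finset.univ.image (A p) :=
      Finset.mem_image_of_mem _ (Finset.mem_univ m)
    have hmemB : A p m ∉ Finset.univ.image (B q) := by
      intro h
      obtain ⟨n, -, hn⟩ := Finset.mem_image.mp h
      have h1 : n = m := congrArg Sigma.fst hn
      subst h1
      have hn' : (⟨n, (q n.castSucc, i' n, q n.succ)⟩ :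
          Σ n : Fin N, Fin (ttRk N R n.castSucc) × Fin (d n) × Fin (ttRk N R n.succ))
          = ⟨n, (p n.castSucc, i n, p n.succ)⟩ := hn
      injection hn' with h1' h2'
      exact hm (congrArg (fun x => x.2.1) h2').symm
    simp only [e, if_pos hmemA, if_neg hmemB]
  -- per-term integral is zero
  have hterm : ∀ p q, ∫ ω, ∏ j, g j ω ^ e p q j ∂μ = 0 := by
    intro p q
    set j₀ := A p m with hj₀
    let h : (Σ n : Fin N, Fin (ttRk N R n.castSucc) × Fin (d n) × Fin (ttRk N R n.succ)) →
        Ω → ℝ := fun j ω => g j ω ^ e p q j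
    have hh_indep : iIndepFun h μ :=
      hindep.comp (fun j x => x ^ e p q j) (fun j => measurable_id.pow_const _)
    have hmeas_h : ∀ j, Measurable (h j) := fun j => (hgmeas j).pow_const _
    have hind : IndepFun (∏ j ∈ Finset.univ.erase j₀, h j) (h j₀) μ :=
      hh_indep.indepFun_finsetProd_of_notMem hmeas_h (Finset.notMem_erase _ _)
    have hprodfn : (∏ j ∈ Finset.univ.erase j₀, h j)
        = fun ω => ∏ j ∈ Finset.univ.erase j₀, h j ω :=
      funext fun ω => Finset.prod_apply ω _ _
    have hmeasprod : Measurable (∏ j ∈ Finset.univ.erase j₀, h j) := by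
      rw [hprodfn]; exact Finset.measurable_prod _ fun j _ => hmeas_h j
    have hsplit : ∀ ω, ∏ j, g j ω ^ e p q j
        = (∏ j ∈ Finset.univ.erase j₀, h j) ω * h j₀ ω := by
      intro ω
      rw [Finset.prod_apply]
      rw [← Finset.mul_prod_erase Finset.univ (fun j => g j ω ^ e p q j) (Finset.mem_univ j₀)]
      ring
    calc ∫ ω, ∏ j, g j ω ^ e p q j ∂μ
        = ∫ ω, (∏ j ∈ Finset.univ.erase j₀, h j) ω * h j₀ ω ∂μ := by
          exact integral_congr_ae (Filter.Eventually.of_forall hsplit)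
      _ = (∫ ω, (∏ j ∈ Finset.univ.erase j₀, h j) ω ∂μ) * ∫ ω, h j₀ ω ∂μ := by
          exact hind.integral_fun_mul_eq_mul_integral hmeasprod.aestronglyMeasurable
            (hmeas_h j₀).aestronglyMeasurable
      _ = 0 := by
          have : (fun ω => h j₀ ω) = g j₀ := by
            funext ω; simp only [h, hj₀, he1 p q, pow_one]
          rw [show ∫ ω, h j₀ ω ∂μ = 0 from by
            rw [show (fun ω => h j₀ ω) = g j₀ from this]
            exact rademacher_integral_zero (hgmeas j₀) (hglaw j₀), mul_zero]
  -- integrability of each term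
  have hintble : ∀ p q, Integrable (fun ω => ∏ j, g j ω ^ e p q j) μ := by
    intro p q
    refine Integrable.mono' (integrable_const (1:ℝ))
      (Finset.measurable_prod _ (fun j _ => (hgmeas j).pow_const _)).aestronglyMeasurable ?_
    filter_upwards [hae] with ω hω
    have habs : ∀ j, |g j ω ^ e p q j| = 1 := by
      intro j
      rcases hω j with h | h <;> simp [h, abs_pow]
    calc ‖∏ j, g j ω ^ e p q j‖ = |∏ j, g j ω ^ e p q j| := rfl
      _ = ∏ j, |g j ω ^ e p q j| := Finset.abs_prod _ _
      _ = 1 := by simp [habs]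
      _ ≤ 1 := le_refl 1
  -- assemble
  have hchain : ∀ ω, ttEntry G i ω * ttEntry G i' ω
      = ((Real.sqrt (R ^ (N - 1)))⁻¹ * (Real.sqrt (R ^ (N - 1)))⁻¹) *
        ∑ p, ∑ q, ∏ j, g j ω ^ e p q j := by
    intro ω
    have : ttChain G i ω * ttChain G i' ω = ∑ p, ∑ q, ∏ j, g j ω ^ e p q j := by
      rw [ttChain, ttChain, Finset.sum_mul_sum]
      exact Finset.sum_congr rfl fun p _ => Finset.sum_congr rfl fun q _ => hprod p q ω
    rw [ttEntry, ttEntry]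
    rw [← this]; ring
  simp_rw [hchain]
  rw [integral_const_mul]
  rw [integral_finset_sum _ (fun p _ => integrable_finset_sum _ (fun q _ => hintble p q))]
  rw [Finset.sum_eq_zero (fun p _ => by
    rw [integral_finset_sum _ (fun q _ => hintble p q)]
    exact Finset.sum_eq_zero fun q _ => hterm p q), mul_zero]
end
end

section
/- Let X and Y be fixed real tensors of order N with mode dimensions d_1, ..., d_N, and let T be a TT-Rademacher distributed tensor of rank parameter R of the same shape. Then Cov(⟨T, X⟩, ⟨T, Y⟩) = ⟨X, Y⟩, and hence the covariance matrix of the random vector (⟨T, X⟩, ⟨T, Y⟩) is [[||X||_F^2, ⟨X,Y⟩], [⟨X,Y⟩, ||Y||_F^2]]. -/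
open MeasureTheory ProbabilityTheory

noncomputable section

/-- The covariance of two real random variables. -/
def cov {Ω : Type*} [MeasurableSpace Ω] (μ : Measure Ω) (f g : Ω → ℝ) : ℝ :=
  ∫ ω, (f ω - ∫ ω', f ω' ∂μ) * (g ω - ∫ ω', g ω' ∂μ) ∂μ


section Helpers
variable {Ω ι : Type*} [MeasurableSpace Ω] {μ : Measure Ω} [IsProbabilityMeasure μ]
  {F : ι → Ω → ℝ}

lemma aux_prod_integral (hmeas : ∀ σ, Measurable (F σ))
    (hindep : iIndepFun F μ) (s : Finset ι) :
    ∫ ω, ∏ τ ∈ s, F τ ω ∂μ = ∏ τ ∈ s, ∫ ω, F τ ω ∂μ := by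
  classical
  induction s using Finset.induction_on with
  | empty => simp
  | @insert a s h ih =>
    have hpm : Measurable (∏ j ∈ s, F j) := by
      rw [Finset.prod_fn]; exact Finset.measurable_prod s fun i _ => hmeas i
    have := IndepFun.integral_mul_eq_mul_integral (hindep.indepFun_finsetProd_of_notMem hmeas h).symm
      (hmeas a).aestronglyMeasurable hpm.aestronglyMeasurable
    have h1 : integral μ (F a * ∏ j ∈ s, F j) = ∫ ω, ∏ τ ∈ insert a s, F τ ω ∂μ := by
      congr 1; ext ω; simp [Finset.prod_apply, Finset.prod_insert h]
    have h2 : integral μ (∏ j ∈ s, F j) = ∫ ω, ∏ τ ∈ s, F τ ω ∂μ := by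
      congr 1; ext ω; simp [Finset.prod_apply]
    rw [h1, h2, ih] at this
    rw [this, Finset.prod_insert h]

lemma aux_prod_sq_one {x : ι → ℝ} (hx : ∀ τ, x τ ^ 2 = 1) (s t : Finset ι) [DecidableEq ι] :
    (∏ τ ∈ s, x τ) * ∏ τ ∈ t, x τ = ∏ τ ∈ symmDiff s t, x τ := by
  have h1 : ∏ τ ∈ s, x τ = (∏ τ ∈ s \ t, x τ) * ∏ τ ∈ s ∩ t, x τ := by
    rw [← Finset.prod_sdiff Finset.inter_subset_left, Finset.sdiff_inter_self_left]
  have h2 : ∏ τ ∈ t, x τ = (∏ τ ∈ t \ s, x τ) * ∏ τ ∈ s ∩ t, x τ := by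
    rw [← Finset.prod_sdiff Finset.inter_subset_right, Finset.sdiff_inter_self_right]
  have h3 : symmDiff s t = (s \ t) ∪ (t \ s) := by
    rw [symmDiff_def]; rfl
  have h4 : (∏ τ ∈ s ∩ t, x τ) * ∏ τ ∈ s ∩ t, x τ = 1 := by
    rw [← Finset.prod_mul_distrib]
    apply Finset.prod_eq_one; intro τ _; have := hx τ; nlinarith
  rw [h1, h2, h3, Finset.prod_union disjoint_sdiff_sdiff]
  calc ((∏ τ ∈ s \ t, x τ) * ∏ τ ∈ s ∩ t, x τ) * ((∏ τ ∈ t \ s, x τ) * ∏ τ ∈ s ∩ t, x τ)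
      = ((∏ τ ∈ s \ t, x τ) * ∏ τ ∈ t \ s, x τ) *
        ((∏ τ ∈ s ∩ t, x τ) * ∏ τ ∈ s ∩ t, x τ) := by ring
    _ = (∏ τ ∈ s \ t, x τ) * ∏ τ ∈ t \ s, x τ := by rw [h4, mul_one]

lemma aux_abs_one {y : ℝ} (h : y ^ 2 = 1) : |y| = 1 := by
  rcases abs_cases y with ⟨h1, _⟩ | ⟨h1, _⟩ <;> nlinarith [abs_nonneg y]

lemma aux_integrable_prod_mul [Countable ι]
    (hmeas : ∀ σ, Measurable (F σ)) (hsq : ∀ σ, ∀ᵐ ω ∂μ, (F σ ω) ^ 2 = 1) (s t : Finset ι) :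
    Integrable (fun ω => (∏ τ ∈ s, F τ ω) * ∏ τ ∈ t, F τ ω) μ := by
  have hall : ∀ᵐ ω ∂μ, ∀ τ, (F τ ω) ^ 2 = 1 := ae_all_iff.2 hsq
  refine Integrable.mono' (integrable_const 1)
    ((Finset.measurable_prod s fun i _ => hmeas i).mul
      (Finset.measurable_prod t fun i _ => hmeas i)).aestronglyMeasurable ?_
  filter_upwards [hall] with ω hω
  have h1 : ∀ u : Finset ι, |∏ τ ∈ u, F τ ω| = 1 := by
    intro u
    rw [Finset.abs_prod]
    exact Finset.prod_eq_one fun τ _ => aux_abs_one (hω τ)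
  rw [Real.norm_eq_abs, abs_mul, h1, h1, mul_one]

lemma aux_key [Countable ι] [DecidableEq ι]
    (hmeas : ∀ σ, Measurable (F σ)) (hindep : iIndepFun F μ)
    (hsq : ∀ σ, ∀ᵐ ω ∂μ, (F σ ω) ^ 2 = 1) (hmean : ∀ σ, ∫ ω, F σ ω ∂μ = 0) (s t : Finset ι) :
    ∫ ω, (∏ τ ∈ s, F τ ω) * ∏ τ ∈ t, F τ ω ∂μ = if s = t then 1 else 0 := by
  have hall : ∀ᵐ ω ∂μ, ∀ τ, (F τ ω) ^ 2 = 1 := ae_all_iff.2 hsq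
  rw [integral_congr_ae (hall.mono fun ω hω => aux_prod_sq_one hω s t)]
  by_cases h : s = t
  · subst h
    rw [if_pos rfl, symmDiff_self]
    simp
  · rw [if_neg h, aux_prod_integral hmeas hindep]
    have hne : (symmDiff s t : Finset ι) ≠ ⊥ := fun hc => h (symmDiff_eq_bot.mp hc)
    obtain ⟨τ0, hτ0⟩ := Finset.nonempty_iff_ne_empty.mpr hne
    exact Finset.prod_eq_zero hτ0 (hmean τ0)


lemma aux_rad_sq {f : Ω → ℝ} (hm : Measurable f) (hl : μ.map f = rademacherLaw) :
    ∀ᵐ ω ∂μ, (f ω) ^ 2 = 1 := by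
  have hset : MeasurableSet {x : ℝ | x ^ 2 = 1} :=
    measurableSet_eq_fun (by measurability) measurable_const
  refine ae_iff.mpr ?_
  have hpre : f ⁻¹' {x : ℝ | x ^ 2 = 1}ᶜ = {ω | ¬ (f ω) ^ 2 = 1} := rfl
  have h0 : μ (f ⁻¹' {x : ℝ | x ^ 2 = 1}ᶜ) = (μ.map f) {x : ℝ | x ^ 2 = 1}ᶜ :=
    (Measure.map_apply hm hset.compl).symm
  rw [hpre] at h0
  rw [h0, hl, rademacherLaw]
  simp only [Measure.add_apply, Measure.smul_apply, smul_eq_mul]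
  rw [Measure.dirac_apply' _ hset.compl, Measure.dirac_apply' _ hset.compl]
  have h1 : (1 : ℝ) ∉ {x : ℝ | x ^ 2 = 1}ᶜ := fun hc => hc (by norm_num)
  have h2 : (-1 : ℝ) ∉ {x : ℝ | x ^ 2 = 1}ᶜ := fun hc => hc (by norm_num)
  rw [Set.indicator_of_notMem h1, Set.indicator_of_notMem h2]
  simp

lemma aux_int_id_dirac (a : ℝ) : Integrable (fun x : ℝ => x) (Measure.dirac a) :=
  (integrable_const a).congr (ae_eq_dirac (fun x : ℝ => x)).symm

lemma aux_rad_mean {f : Ω → ℝ} (hm : Measurable f) (hl : μ.map f = rademacherLaw) :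
    ∫ ω, f ω ∂μ = 0 := by
  have h : ∫ ω, f ω ∂μ = ∫ x, x ∂(μ.map f) :=
    (integral_map hm.aemeasurable aestronglyMeasurable_id).symm
  rw [h, hl, rademacherLaw, integral_add_measure
      ((aux_int_id_dirac 1).smul_measure (by norm_num))
      ((aux_int_id_dirac (-1)).smul_measure (by norm_num)),
    integral_smul_measure, integral_smul_measure, integral_dirac, integral_dirac]
  norm_num

end Helpers

section Comb

variable {N R : ℕ} {d : Fin N → ℕ}

/-- index type of all scalar core entries -/
abbrev ttIdx (N R : ℕ) (d : Fin N → ℕ) :=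
  Σ n : Fin N, Fin (ttRk N R n.castSucc) × Fin (d n) × Fin (ttRk N R n.succ)

def ttPath (i : (n : Fin N) → Fin (d n)) (p : (k : Fin (N + 1)) → Fin (ttRk N R k))
    (n : Fin N) : ttIdx N R d :=
  ⟨n, (p n.castSucc, i n, p n.succ)⟩

def ttS (i : (n : Fin N) → Fin (d n)) (p : (k : Fin (N + 1)) → Fin (ttRk N R k)) :
    Finset (ttIdx N R d) :=
  Finset.image (ttPath i p) Finset.univ

lemma ttS_prod {Ω : Type*} (F : ttIdx N R d → Ω → ℝ) (i : (n : Fin N) → Fin (d n))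
    (p : (k : Fin (N + 1)) → Fin (ttRk N R k)) (ω : Ω) :
    ∏ τ ∈ ttS i p, F τ ω = ∏ n : Fin N, F (ttPath i p n) ω := by
  rw [ttS, Finset.prod_image]
  intro a _ b _ hab
  exact congrArg Sigma.fst hab

lemma ttS_nonempty (hN : 0 < N) (i : (n : Fin N) → Fin (d n))
    (p : (k : Fin (N + 1)) → Fin (ttRk N R k)) : (ttS i p).Nonempty :=
  ⟨ttPath i p ⟨0, hN⟩, Finset.mem_image_of_mem _ (Finset.mem_univ _)⟩

lemma ttRk_one_of (k : Fin (N + 1)) (h : k = 0 ∨ k = Fin.last N) : ttRk N R k = 1 := by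
  rw [ttRk, if_pos h]

lemma ttS_inj {i j : (n : Fin N) → Fin (d n)} {p q : (k : Fin (N + 1)) → Fin (ttRk N R k)}
    (h : ttS i p = ttS j q) : i = j ∧ p = q := by
  have htrip : ∀ n : Fin N,
      (q n.castSucc, j n, q n.succ) = (p n.castSucc, i n, p n.succ) := by
    intro n
    have hmem : ttPath i p n ∈ ttS j q := by
      rw [← h]; exact Finset.mem_image_of_mem _ (Finset.mem_univ _)
    rw [ttS, Finset.mem_image] at hmem
    obtain ⟨m, -, hm⟩ := hmem
    rw [ttPath, ttPath, Sigma.mk.inj_iff] at hm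
    obtain ⟨rfl, hm2⟩ := hm
    exact eq_of_heq hm2
  constructor
  · funext n
    exact ((Prod.mk.injEq _ _ _ _).mp ((Prod.mk.injEq _ _ _ _).mp (htrip n)).2).1.symm
  · funext k
    by_cases hk : k = 0
    · subst hk
      have h1 : ttRk N R 0 = 1 := ttRk_one_of 0 (Or.inl rfl)
      have hp := (p 0).isLt
      have hq := (q 0).isLt
      exact Fin.ext (by omega)
    · have hsp : (k.pred hk).succ = k := Fin.succ_pred k hk
      rw [← hsp]
      exact ((Prod.mk.injEq _ _ _ _).mp ((Prod.mk.injEq _ _ _ _).mp (htrip (k.pred hk))).2).2.symm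

lemma ttS_eq_iff {i j : (n : Fin N) → Fin (d n)} {p q : (k : Fin (N + 1)) → Fin (ttRk N R k)} :
    ttS i p = ttS j q ↔ i = j ∧ p = q := by
  constructor
  · exact ttS_inj
  · rintro ⟨rfl, rfl⟩; rfl

lemma ttRk_card (hN : 0 < N) (hR : 0 < R) :
    ∏ k : Fin (N + 1), ttRk N R k = R ^ (N - 1) := by
  classical
  have h0 : ∏ k : Fin (N + 1), ttRk N R k =
      ∏ k : Fin (N + 1), if k = 0 ∨ k = Fin.last N then 1 else R := rfl
  rw [h0, Finset.prod_ite, Finset.prod_const_one, one_mul, Finset.prod_const]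
  congr 1
  have hfilter : Finset.univ.filter (fun k : Fin (N + 1) => k = 0 ∨ k = Fin.last N) =
      {0, Fin.last N} := by
    ext k; simp [Finset.mem_filter, Finset.mem_insert]
  have hlast : (Fin.last N : Fin (N + 1)) ≠ 0 := by
    intro hc
    have := congrArg Fin.val hc
    simp [Fin.last] at this
    omega
  have hcard2 : (Finset.univ.filter (fun k : Fin (N + 1) => k = 0 ∨ k = Fin.last N)).card = 2 := by
    rw [hfilter, Finset.card_insert_of_notMem (by simp [hlast.symm]), Finset.card_singleton]
  have := Finset.card_filter_add_card_filter_not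
    (s := (Finset.univ : Finset (Fin (N + 1))))
    (p := fun k => k = 0 ∨ k = Fin.last N)
  rw [hcard2, Finset.card_univ, Fintype.card_fin] at this
  omega

end Comb

section Main

theorem tt_cov_core
    {Ω : Type*} [MeasurableSpace Ω] (μ : Measure Ω) [IsProbabilityMeasure μ]
    (N R : ℕ) (hN : 0 < N) (hR : 0 < R) (d : Fin N → ℕ)
    (G : (n : Fin N) → Fin (ttRk N R n.castSucc) → Fin (d n) → Fin (ttRk N R n.succ) → Ω → ℝ)
    (hmeas : ∀ n a i b, Measurable (G n a i b))
    (hlaw : ∀ n a i b, μ.map (G n a i b) = rademacherLaw)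
    (hindep : iIndepFun
      (fun p : Σ n : Fin N, Fin (ttRk N R n.castSucc) × Fin (d n) × Fin (ttRk N R n.succ) =>
        G p.1 p.2.1 p.2.2.1 p.2.2.2) μ)
    (X Y : ((n : Fin N) → Fin (d n)) → ℝ) :
    cov μ (ttInner G X) (ttInner G Y) = ∑ i : (n : Fin N) → Fin (d n), X i * Y i := by
  classical
  set c : ℝ := (Real.sqrt (R ^ (N - 1)))⁻¹ with hc
  set F : ttIdx N R d → Ω → ℝ := fun σ => G σ.1 σ.2.1 σ.2.2.1 σ.2.2.2 with hF
  have hmF : ∀ σ, Measurable (F σ) := fun σ => hmeas _ _ _ _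
  have hindepF : iIndepFun F μ := hindep
  have hsq : ∀ σ, ∀ᵐ ω ∂μ, (F σ ω) ^ 2 = 1 := fun σ =>
    aux_rad_sq (hmF σ) (hlaw σ.1 σ.2.1 σ.2.2.1 σ.2.2.2)
  have hmean : ∀ σ, ∫ ω, F σ ω ∂μ = 0 := fun σ =>
    aux_rad_mean (hmF σ) (hlaw σ.1 σ.2.1 σ.2.2.1 σ.2.2.2)
  have hImul : ∀ s t : Finset (ttIdx N R d),
      Integrable (fun ω => (∏ τ ∈ s, F τ ω) * ∏ τ ∈ t, F τ ω) μ :=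
    fun s t => aux_integrable_prod_mul hmF hsq s t
  have hIprod : ∀ s : Finset (ttIdx N R d), Integrable (fun ω => ∏ τ ∈ s, F τ ω) μ := by
    intro s
    have := hImul s ∅
    simpa using this
  have hkey : ∀ s t : Finset (ttIdx N R d),
      ∫ ω, (∏ τ ∈ s, F τ ω) * ∏ τ ∈ t, F τ ω ∂μ = if s = t then 1 else 0 :=
    aux_key hmF hindepF hsq hmean
  have hinner : ∀ (Z : ((n : Fin N) → Fin (d n)) → ℝ) (ω : Ω),
      ttInner G Z ω = ∑ z : ((n : Fin N) → Fin (d n)) × ((k : Fin (N + 1)) → Fin (ttRk N R k)),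
        (c * Z z.1) * ∏ τ ∈ ttS z.1 z.2, F τ ω := by
    intro Z ω
    rw [ttInner, Fintype.sum_prod_type]
    refine Finset.sum_congr rfl fun i _ => ?_
    rw [ttEntry, ttChain]
    rw [Finset.mul_sum, Finset.sum_mul]
    refine Finset.sum_congr rfl fun p _ => ?_
    rw [ttS_prod]
    show c * (∏ n : Fin N, G n (p n.castSucc) (i n) (p n.succ) ω) * Z i =
      c * Z i * ∏ n : Fin N, G n (p n.castSucc) (i n) (p n.succ) ω
    ring
  have hmean0 : ∀ Z : ((n : Fin N) → Fin (d n)) → ℝ, ∫ ω, ttInner G Z ω ∂μ = 0 := by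
    intro Z
    rw [integral_congr_ae (Filter.Eventually.of_forall (hinner Z))]
    rw [integral_finset_sum _ fun z _ => (hIprod _).const_mul _]
    refine Finset.sum_eq_zero fun z _ => ?_
    rw [integral_const_mul, aux_prod_integral hmF hindepF]
    obtain ⟨τ0, hτ0⟩ := ttS_nonempty hN z.1 z.2
    rw [Finset.prod_eq_zero hτ0 (hmean τ0), mul_zero]
  have hsecond : ∫ ω, ttInner G X ω * ttInner G Y ω ∂μ
      = ∑ i : (n : Fin N) → Fin (d n), X i * Y i := by
    have hfun : ∀ ω, ttInner G X ω * ttInner G Y ω =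
        ∑ z : ((n : Fin N) → Fin (d n)) × ((k : Fin (N + 1)) → Fin (ttRk N R k)),
          ∑ w : ((n : Fin N) → Fin (d n)) × ((k : Fin (N + 1)) → Fin (ttRk N R k)),
            ((c * X z.1) * (c * Y w.1)) *
              ((∏ τ ∈ ttS z.1 z.2, F τ ω) * ∏ τ ∈ ttS w.1 w.2, F τ ω) := by
      intro ω
      rw [hinner X ω, hinner Y ω, Finset.sum_mul_sum]
      exact Finset.sum_congr rfl fun z _ => Finset.sum_congr rfl fun w _ => by ring
    rw [integral_congr_ae (Filter.Eventually.of_forall hfun)]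
    rw [integral_finset_sum _ fun z _ =>
      integrable_finset_sum _ fun w _ => (hImul _ _).const_mul _]
    have hstep : ∀ z : ((n : Fin N) → Fin (d n)) × ((k : Fin (N + 1)) → Fin (ttRk N R k)),
        (∫ ω, ∑ w : ((n : Fin N) → Fin (d n)) × ((k : Fin (N + 1)) → Fin (ttRk N R k)),
          ((c * X z.1) * (c * Y w.1)) *
            ((∏ τ ∈ ttS z.1 z.2, F τ ω) * ∏ τ ∈ ttS w.1 w.2, F τ ω) ∂μ)
        = (c * X z.1) * (c * Y z.1) := by
      intro z
      rw [integral_finset_sum _ fun w _ => (hImul _ _).const_mul _]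
      have : ∀ w : ((n : Fin N) → Fin (d n)) × ((k : Fin (N + 1)) → Fin (ttRk N R k)),
          (∫ ω, ((c * X z.1) * (c * Y w.1)) *
            ((∏ τ ∈ ttS z.1 z.2, F τ ω) * ∏ τ ∈ ttS w.1 w.2, F τ ω) ∂μ)
          = if z = w then (c * X z.1) * (c * Y w.1) else 0 := by
        intro w
        rw [integral_const_mul, hkey]
        have hiff : (ttS z.1 z.2 = ttS w.1 w.2) ↔ z = w := by
          rw [ttS_eq_iff]
          constructor
          · rintro ⟨h1, h2⟩; exact Prod.ext h1 h2
          · rintro rfl; exact ⟨rfl, rfl⟩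
        rw [if_congr hiff rfl rfl]
        split_ifs <;> ring
      rw [Finset.sum_congr rfl fun w _ => this w, Finset.sum_ite_eq, if_pos (Finset.mem_univ z)]
    rw [Finset.sum_congr rfl fun z _ => hstep z]
    rw [Fintype.sum_prod_type]
    have hnorm : ((Fintype.card ((k : Fin (N + 1)) → Fin (ttRk N R k)) : ℝ)) * (c * c) = 1 := by
      have hcardP : Fintype.card ((k : Fin (N + 1)) → Fin (ttRk N R k)) = R ^ (N - 1) := by
        rw [Fintype.card_pi]
        simp only [Fintype.card_fin]
        exact ttRk_card hN hR
      have hcc : c * c = (((R : ℝ)) ^ (N - 1))⁻¹ := by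
        rw [hc, ← mul_inv, Real.mul_self_sqrt (by positivity)]
      rw [hcardP, hcc]
      push_cast
      rw [mul_inv_cancel₀ (by positivity)]
    refine Finset.sum_congr rfl fun i _ => ?_
    show (∑ _p : (k : Fin (N + 1)) → Fin (ttRk N R k), c * X i * (c * Y i)) = X i * Y i
    rw [Finset.sum_const, Finset.card_univ, nsmul_eq_mul]
    calc (Fintype.card ((k : Fin (N + 1)) → Fin (ttRk N R k)) : ℝ) * (c * X i * (c * Y i))
        = ((Fintype.card ((k : Fin (N + 1)) → Fin (ttRk N R k)) : ℝ) * (c * c)) * (X i * Y i) := by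
          ring
      _ = X i * Y i := by rw [hnorm, one_mul]
  rw [cov, hmean0 X, hmean0 Y]
  simp only [sub_zero]
  exact hsecond

end Main


/-- For fixed tensors `X, Y` and a TT-Rademacher distributed tensor `T`
of rank parameter `R` of the same shape, `Cov(⟨T, X⟩, ⟨T, Y⟩) = ⟨X, Y⟩`; hence the
covariance matrix of `(⟨T, X⟩, ⟨T, Y⟩)` is `[[‖X‖_F², ⟨X,Y⟩], [⟨X,Y⟩, ‖Y‖_F²]]`. -/
theorem tt_inner_covariance
    {Ω : Type*} [MeasurableSpace Ω] (μ : Measure Ω) [IsProbabilityMeasure μ]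
    (N R : ℕ) (hN : 0 < N) (hR : 0 < R) (d : Fin N → ℕ)
    (G : (n : Fin N) → Fin (ttRk N R n.castSucc) → Fin (d n) → Fin (ttRk N R n.succ) → Ω → ℝ)
    (hmeas : ∀ n a i b, Measurable (G n a i b))
    (hlaw : ∀ n a i b, μ.map (G n a i b) = rademacherLaw)
    (hindep : iIndepFun
      (fun p : Σ n : Fin N, Fin (ttRk N R n.castSucc) × Fin (d n) × Fin (ttRk N R n.succ) =>
        G p.1 p.2.1 p.2.2.1 p.2.2.2) μ)
    (X Y : ((n : Fin N) → Fin (d n)) → ℝ) :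
    cov μ (ttInner G X) (ttInner G Y) = ∑ i : (n : Fin N) → Fin (d n), X i * Y i ∧
    Matrix.of (fun a b : Fin 2 =>
        cov μ (ttInner G (if a = 0 then X else Y)) (ttInner G (if b = 0 then X else Y))) =
      Matrix.of ![![∑ i : (n : Fin N) → Fin (d n), X i ^ 2,
                    ∑ i : (n : Fin N) → Fin (d n), X i * Y i],
                  ![∑ i : (n : Fin N) → Fin (d n), X i * Y i,
                    ∑ i : (n : Fin N) → Fin (d n), Y i ^ 2]] := by
  have core : ∀ A B : ((n : Fin N) → Fin (d n)) → ℝ,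
      cov μ (ttInner G A) (ttInner G B) = ∑ i : (n : Fin N) → Fin (d n), A i * B i :=
    fun A B => tt_cov_core μ N R hN hR d G hmeas hlaw hindep A B
  refine ⟨core X Y, ?_⟩
  ext a b
  fin_cases a <;> fin_cases b <;>
    simp only [Matrix.of_apply, Fin.isValue, if_true, if_false, Fin.zero_eta, Fin.mk_one,
      Matrix.cons_val', Matrix.cons_val_zero, Matrix.cons_val_one, Matrix.head_cons,
      Matrix.empty_val', Matrix.cons_val_fin_one, Matrix.head_fin_const, one_ne_zero, ite_true,
      ite_false, reduceIte]
  · rw [core X X]; exact Finset.sum_congr rfl fun i _ => (sq (X i)).symm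
  · exact core X Y
  · rw [core Y X]; exact Finset.sum_congr rfl fun i _ => mul_comm _ _
  · rw [core Y Y]; exact Finset.sum_congr rfl fun i _ => (sq (Y i)).symm
end
end
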